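/- Suppose the distribution functions f₋₁, f₀, f₁ : ℤ × ℕ → ℝ satisfy the MRT-LB evolution equations for all j ∈ ℤ and n ∈ ℕ, let φⱼⁿ be the associated macroscopic variable, and define the second difference D(j,n) = f₀(j−1,n) − 2f₀(j,n) + f₀(j+1,n). Then for every j ∈ ℤ and every n ≥ 2, one has D(j,n) = (s₁−1)·D(j,n−1) − 2φⱼⁿ + (2−s₁)·φⱼ₋₁ⁿ⁻¹ + (2−s₁)·φⱼ₊₁ⁿ⁻¹ + (2s₁−2)·φⱼⁿ⁻² + 2s₁·Δt·R. -/
import Mathlib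


/-- Recurrence for the second difference
`D(j,n) = f₀(j−1,n) − 2f₀(j,n) + f₀(j+1,n)` implied by the MRT-LB evolution
equations, for every `j` and `n ≥ 2`. -/
theorem mrt_lb_second_difference_recurrence
    (Δt R ω₀ s₁ s₂ : ℝ) (hΔt : 0 < Δt)
    (fm f0 f1 : ℤ → ℕ → ℝ) (φ : ℤ → ℕ → ℝ) (ω₁ : ℝ)
    (D : ℤ → ℕ → ℝ)
    (hω₁ : ω₁ = (1 - ω₀) / 2)
    (hφ : ∀ (j : ℤ) (n : ℕ),
      φ j n = fm j n + f0 j n + f1 j n + (Δt / 2) * R)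
    (hD : ∀ (j : ℤ) (n : ℕ),
      D j n = f0 (j - 1) n - 2 * f0 j n + f0 (j + 1) n)
    (hevm : ∀ (j : ℤ) (n : ℕ), fm j (n + 1) =
      fm (j + 1) n - (s₁ / 2) * (fm (j + 1) n - f1 (j + 1) n)
        + (s₂ / 2) * f0 (j + 1) n - (ω₀ * s₂ / 2) * φ (j + 1) n
        + (ω₁ + ω₀ * s₂ / 4) * Δt * R)
    (hev0 : ∀ (j : ℤ) (n : ℕ), f0 j (n + 1) =
      (1 - s₂) * f0 j n + ω₀ * s₂ * φ j n + ω₀ * (1 - s₂ / 2) * Δt * R)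
    (hevp : ∀ (j : ℤ) (n : ℕ), f1 j (n + 1) =
      f1 (j - 1) n + (s₁ / 2) * (fm (j - 1) n - f1 (j - 1) n)
        + (s₂ / 2) * f0 (j - 1) n - (ω₀ * s₂ / 2) * φ (j - 1) n
        + (ω₁ + ω₀ * s₂ / 4) * Δt * R) :
    ∀ (j : ℤ) (n : ℕ), 2 ≤ n →
      D j n =
        (s₁ - 1) * D j (n - 1)
        - 2 * φ j n
        + (2 - s₁) * φ (j - 1) (n - 1)
        + (2 - s₁) * φ (j + 1) (n - 1)
        + (2 * s₁ - 2) * φ j (n - 2)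
        + 2 * s₁ * Δt * R := by
  intro j n hn
  obtain ⟨m, rfl⟩ : ∃ m, n = m + 2 := ⟨n - 2, by omega⟩
  have h1 : m + 2 - 1 = m + 1 := rfl
  have h2 : m + 2 - 2 = m := rfl
  rw [h1, h2]
  subst hω₁
  simp only [hD, hφ, hevm, hev0, hevp]
  ring
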